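/- Let G be a p-group and H a characteristic subgroup of G such that H/(H ∩ p^ωG) is unbounded. Then p^ωG ⊆ H. -/

import Mathlib

open AddSubgroup

/-- If `b ∈ G` has the property that `p^s • b` is not in `p^(s+1) G` (and `p^(s+1) • b = 0`),
then there is a homomorphism `G →+ ZMod (p^(s+1))` sending `b` to `1`. -/
theorem exists_hom_to_zmod (p : ℕ) (hp : p.Prime) {G : Type*} [AddCommGroup G] (s : ℕ) (b : G)
    (hb0 : p ^ (s + 1) • b = 0) (hbh : ¬ ∃ w : G, p ^ (s + 1) • w = p ^ s • b) :
    ∃ π : G →+ ZMod (p ^ (s + 1)), π b = 1 := by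
  classical
  set m : ℕ := p ^ (s + 1) with hm
  haveI : NeZero m := ⟨pow_ne_zero _ hp.pos.ne'⟩
  have hmQ : (m : ℚ) ≠ 0 := Nat.cast_ne_zero.mpr (NeZero.ne m)
  set σ : G →+ G := AddMonoidHom.mk' (fun x : G => m • x) (fun a b => smul_add m a b) with hσ
  set N : AddSubgroup G := σ.range with hN
  set mk : G →+ G ⧸ N := QuotientAddGroup.mk' N with hmk
  set bb : G ⧸ N := mk b with hbb
  have hmemN : ∀ x : G, x ∈ N ↔ ∃ w : G, m • w = x := by
    intro x
    constructor
    · rintro ⟨w, rfl⟩; exact ⟨w, rfl⟩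
    · rintro ⟨w, rfl⟩; exact ⟨w, rfl⟩
  have hmk0 : ∀ x : G, mk x = 0 ↔ x ∈ N := fun x => QuotientAddGroup.eq_zero_iff x
  have hbdd : ∀ x : G ⧸ N, m • x = 0 := by
    intro x
    induction x using QuotientAddGroup.induction_on with
    | H y => rw [show ((y : G ⧸ N) : G ⧸ N) = mk y from rfl, ← map_nsmul, hmk0]
             exact (hmemN _).mpr ⟨y, rfl⟩
  have hbb0 : m • bb = 0 := hbdd bb
  have hbbs : ¬ p ^ s • bb = 0 := by
    rw [hbb, ← map_nsmul, hmk0, hmemN]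
    exact hbh
  have horder : addOrderOf bb = m := by
    have h1 : addOrderOf bb ∣ m := addOrderOf_dvd_of_nsmul_eq_zero hbb0
    obtain ⟨i, hi, heq⟩ := (Nat.dvd_prime_pow hp).mp h1
    rcases Nat.lt_or_ge i (s + 1) with hlt | hge
    · exfalso
      apply hbbs
      rw [← addOrderOf_dvd_iff_nsmul_eq_zero, heq]
      exact pow_dvd_pow p (Nat.lt_succ_iff.mp hlt)
    · rw [heq, hm]
      exact congrArg (p ^ ·) (le_antisymm hi hge)
  have hordvd : ∀ j : ℕ, j • bb = 0 → m ∣ j := by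
    intro j hj
    rw [← horder]
    exact addOrderOf_dvd_of_nsmul_eq_zero hj
  -- the embedding ZMod m →+ G ⧸ N
  have hbbz : ((m : ℤ)) • bb = 0 := by rw [natCast_zsmul]; exact hbb0
  set ι : ZMod m →+ G ⧸ N := ZMod.lift m ⟨zmultiplesHom _ bb, by simpa using hbbz⟩ with hι
  have hιint : ∀ z : ℤ, ι (z : ZMod m) = z • bb := fun z => ZMod.lift_coe _ _ z
  have hιnat : ∀ v : ℕ, ι (v : ZMod m) = v • bb := by
    intro v
    have h : ((v : ℤ) : ZMod m) = (v : ZMod m) := by push_cast; ring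
    rw [← h, hιint, natCast_zsmul]
  have hι1 : ι 1 = bb := by simpa using hιnat 1
  have hιinj : Function.Injective ι := by
    rw [injective_iff_map_eq_zero]
    intro z hz
    have hv : (z.val : ZMod m) = z := ZMod.natCast_rightInverse z
    rw [← hv, hιnat] at hz
    have hdvd := hordvd _ hz
    have hz0 : z.val = 0 := Nat.eq_zero_of_dvd_of_lt hdvd (ZMod.val_lt z)
    rw [← hv, hz0, Nat.cast_zero]
  -- the character ZMod m →+ AddCircle (1 : ℚ)
  set A := AddCircle (1 : ℚ) with hA
  set mkA : ℚ →+ A := QuotientAddGroup.mk' (zmultiples (1 : ℚ)) with hmkA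
  have hmkA0 : ∀ q : ℚ, mkA q = 0 ↔ ∃ z : ℤ, (z : ℚ) = q := by
    intro q
    rw [hmkA, show QuotientAddGroup.mk' (zmultiples (1 : ℚ)) q = (q : A) from rfl]
    rw [QuotientAddGroup.eq_zero_iff, AddSubgroup.mem_zmultiples_iff]
    simp [zsmul_eq_mul]
  set r₀ : A := mkA ((m : ℚ)⁻¹) with hr₀
  have hr₀m : (m : ℤ) • r₀ = 0 := by
    rw [hr₀, ← map_zsmul, hmkA0]
    exact ⟨1, by rw [zsmul_eq_mul]; push_cast; field_simp⟩
  set χ : ZMod m →+ A := ZMod.lift m ⟨zmultiplesHom _ r₀, by simpa using hr₀m⟩ with hχ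
  have hχint : ∀ z : ℤ, χ (z : ZMod m) = z • r₀ := fun z => ZMod.lift_coe _ _ z
  have hχnat : ∀ v : ℕ, χ (v : ZMod m) = v • r₀ := by
    intro v
    have h : ((v : ℤ) : ZMod m) = (v : ZMod m) := by push_cast; ring
    rw [← h, hχint, natCast_zsmul]
  have hχinj : Function.Injective χ := by
    rw [injective_iff_map_eq_zero]
    intro z hz
    have hv : (z.val : ZMod m) = z := ZMod.natCast_rightInverse z
    rw [← hv, hχnat, hr₀, ← map_nsmul, hmkA0] at hz
    obtain ⟨w, hw⟩ := hz
    rw [nsmul_eq_mul] at hw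
    have hq : (z.val : ℚ) = w * m := by
      rw [hw, mul_assoc, inv_mul_cancel₀ hmQ, mul_one]
    have hzw : (z.val : ℤ) = w * m := by exact_mod_cast hq
    have hdvd : m ∣ z.val := by
      have : (m : ℤ) ∣ (z.val : ℤ) := ⟨w, by linarith [hzw]⟩
      exact_mod_cast this
    have hz0 : z.val = 0 := Nat.eq_zero_of_dvd_of_lt hdvd (ZMod.val_lt z)
    rw [← hv, hz0, Nat.cast_zero]
  -- elements of A killed by m are in the range of χ
  have hrange : ∀ q : A, m • q = 0 → q ∈ χ.range := by
    intro q hq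
    induction q using QuotientAddGroup.induction_on with
    | H r =>
      have hr : mkA r = (r : A) := rfl
      rw [← hr, ← map_nsmul, hmkA0] at hq
      obtain ⟨z, hz⟩ := hq
      rw [nsmul_eq_mul] at hz
      refine ⟨(z : ZMod m), ?_⟩
      rw [hχint, hr₀, ← map_zsmul, ← hr]
      congr 1
      rw [zsmul_eq_mul]
      field_simp
      linarith
  -- extend χ along ι by injectivity of AddCircle
  have hsurj := CharacterModule.dual_surjective_of_injective (R := ℤ) ι.toIntLinearMap hιinj
  obtain ⟨π', hπ'⟩ := hsurj χ
  have hπ'ι : ∀ z : ZMod m, π' (ι z) = χ z := by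
    intro z
    have := DFunLike.congr_fun hπ' z
    exact this
  -- π' : CharacterModule (G ⧸ N), i.e. (G ⧸ N) →+ A
  set π'' : G ⧸ N →+ A := π' with hπ''
  have hπ''mem : ∀ x : G, π'' (mk x) ∈ χ.range := by
    intro x
    apply hrange
    rw [← map_nsmul, hbdd, map_zero]
  set ρ : ZMod m ≃+ χ.range := AddMonoidHom.ofInjective hχinj with hρ
  set πR : G →+ χ.range :=
    AddMonoidHom.codRestrict (π''.comp mk) χ.range (fun x => hπ''mem x) with hπR
  refine ⟨ρ.symm.toAddMonoidHom.comp πR, ?_⟩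
  have key : ρ (ρ.symm (πR b)) = ρ 1 := by
    rw [AddEquiv.apply_symm_apply]
    apply Subtype.ext
    rw [AddMonoidHom.ofInjective_apply]
    show π'' (mk b) = χ 1
    rw [← hπ'ι 1, hι1]
    exact congrArg π'' hbb.symm
  have := ρ.injective key
  simpa using this

/-- If `G` is an abelian `p`-group and `H` a characteristic subgroup such
that `H/(H ∩ p^ωG)` is unbounded (for each `s` there is `h ∈ H` with `p^s h ∉ p^ωG`),
then `p^ωG ⊆ H`. -/
theorem stmt18 {G : Type*} [AddCommGroup G] (p : ℕ) (hp : p.Prime)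
    (hpgroup : ∀ g : G, ∃ m : ℕ, p ^ m • g = 0)
    (H : AddSubgroup G)
    (hH : ∀ φ : G ≃+ G, ∀ x ∈ H, φ x ∈ H)
    (hunb : ∀ s : ℕ, ∃ h ∈ H, ¬ (∀ n : ℕ, ∃ y : G, p ^ n • y = p ^ s • h)) :
    ∀ g : G, (∀ n : ℕ, ∃ y : G, p ^ n • y = g) → g ∈ H := by
  classical
  intro g hg
  by_cases hg0 : g = 0
  · rw [hg0]; exact H.zero_mem
  -- k : minimal with p^k • g = 0
  have hex : ∃ m : ℕ, p ^ m • g = 0 := hpgroup g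
  set k := Nat.find hex with hkdef
  have hkg : p ^ k • g = 0 := Nat.find_spec hex
  obtain ⟨h, hhH, hhdiv⟩ := hunb k
  obtain ⟨r, hr⟩ := hpgroup h
  have hpow_smul : ∀ (i j : ℕ) (x : G), p ^ (i + j) • x = p ^ i • (p ^ j • x) := by
    intro i j x; rw [pow_add, mul_smul]
  have hhi : ∀ n, r ≤ n → p ^ n • h = 0 := by
    intro n hn
    have e : p ^ n • h = p ^ (n - r) • (p ^ r • h) := by
      rw [← hpow_smul, Nat.sub_add_cancel hn]
    rw [e, hr, smul_zero]
  set P : ℕ → Prop := fun t => ¬ (∀ n : ℕ, ∃ y : G, p ^ n • y = p ^ t • h) with hP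
  have hPk : P k := hhdiv
  have hkr : k ≤ r := by
    by_contra hc
    push_neg at hc
    exact hPk (fun n => ⟨0, by rw [smul_zero, hhi k hc.le]⟩)
  set t := Nat.findGreatest P r with ht
  have hPt : P t := Nat.findGreatest_spec hkr hPk
  have hkt : k ≤ t := Nat.le_findGreatest hkr hPk
  have htr : t ≤ r := Nat.findGreatest_le r
  have hdivt1 : ∀ n : ℕ, ∃ y : G, p ^ n • y = p ^ (t + 1) • h := by
    rcases Nat.lt_or_ge r (t + 1) with hc | hc
    · intro n; exact ⟨0, by rw [smul_zero, hhi (t + 1) hc.le]⟩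
    · have hng := Nat.findGreatest_is_greatest (P := P) (by rw [← ht]; omega) hc
      rw [hP] at hng
      exact not_not.mp hng
  obtain ⟨n₀, hn₀⟩ : ∃ n₀ : ℕ, ∀ y : G, p ^ n₀ • y ≠ p ^ t • h := by
    have := hPt
    rw [hP] at this
    push_neg at this
    exact this
  set Q : ℕ → Prop := fun j => ∃ y : G, p ^ j • y = p ^ t • h with hQ
  have hQt : Q t := ⟨h, rfl⟩
  have hQmono : ∀ i j : ℕ, i ≤ j → Q j → Q i := by
    rintro i j hij ⟨y, hy⟩
    exact ⟨p ^ (j - i) • y, by rw [← hpow_smul, Nat.add_sub_cancel' hij, hy]⟩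
  have htn₀ : t ≤ n₀ := by
    by_contra hc
    push_neg at hc
    obtain ⟨y, hy⟩ := hQmono n₀ t hc.le hQt
    exact hn₀ y hy
  set s := Nat.findGreatest Q n₀ with hs
  have hQs : Q s := Nat.findGreatest_spec htn₀ hQt
  have hts : t ≤ s := Nat.le_findGreatest htn₀ hQt
  have hsn₀ : s ≤ n₀ := Nat.findGreatest_le n₀
  have hslt : s < n₀ := by
    rcases lt_or_eq_of_le hsn₀ with h' | h'
    · exact h'
    · exfalso
      obtain ⟨y, hy⟩ := hQs
      rw [h'] at hy
      exact hn₀ y hy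
  have hQs1 : ¬ Q (s + 1) := Nat.findGreatest_is_greatest (by rw [← hs]; omega) (by omega)
  obtain ⟨y₀, hy₀⟩ := hQs
  obtain ⟨v, hv⟩ := hdivt1 (s + 2)
  set b := y₀ - p • v with hbdef
  have hb2 : p ^ s • b = p ^ t • h - p ^ (s + 1) • v := by
    rw [hbdef, smul_sub, hy₀]
    congr 1
    rw [← mul_smul, ← pow_succ]
  have hb0 : p ^ (s + 1) • b = 0 := by
    have h1 : p ^ (s + 1) • b = p • (p ^ s • b) := by rw [← mul_smul, ← pow_succ']
    have h2 : p • (p ^ t • h) = p ^ (t + 1) • h := by rw [← mul_smul, ← pow_succ']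
    have h3 : p • (p ^ (s + 1) • v) = p ^ (s + 2) • v := by rw [← mul_smul, ← pow_succ']
    rw [h1, hb2, smul_sub, h2, h3, hv, sub_self]
  have hbh : ¬ ∃ w : G, p ^ (s + 1) • w = p ^ s • b := by
    rintro ⟨w, hw⟩
    apply hQs1
    refine ⟨w + v, ?_⟩
    rw [smul_add, hw, hb2, sub_add_cancel]
  set m := p ^ (s + 1) with hm
  obtain ⟨π, hπb⟩ := exists_hom_to_zmod p hp s b hb0 hbh
  haveI : NeZero m := ⟨pow_ne_zero _ hp.pos.ne'⟩
  have hπkill : ∀ x : G, π (p ^ (s + 1) • x) = 0 := by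
    intro x
    rw [map_nsmul, nsmul_eq_mul]
    rw [show ((p ^ (s + 1) : ℕ) : ZMod m) = 0 from by rw [← hm]; exact ZMod.natCast_self m,
      zero_mul]
  have hπg : π g = 0 := by
    obtain ⟨w, hw⟩ := hg (s + 1)
    rw [← hw, hπkill]
  have hπh : ((p : ZMod m)) ^ t * π h = (p : ZMod m) ^ s := by
    have e1 : p ^ t • h = p ^ s • b + p ^ (s + 1) • v := by rw [hb2]; abel
    have e2 : π (p ^ t • h) = (p : ZMod m) ^ t * π h := by
      rw [map_nsmul, nsmul_eq_mul]; push_cast; ring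
    have e3 : π (p ^ t • h) = (p : ZMod m) ^ s := by
      rw [e1, map_add, hπkill, add_zero, map_nsmul, hπb, nsmul_eq_mul, mul_one]
      push_cast; ring
    rw [← e2, e3]
  set c := (π h).val with hcdef
  have hcast : ((c : ℕ) : ZMod m) = π h := ZMod.natCast_rightInverse (π h)
  obtain ⟨lam, hlam⟩ : ∃ lam : ℤ, (c : ℤ) * (p : ℤ) ^ t - (p : ℤ) ^ s = lam * (p : ℤ) ^ (s + 1) := by
    have hmod : ((p ^ t * c : ℕ) : ZMod m) = ((p ^ s : ℕ) : ZMod m) := by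
      push_cast
      rw [hcast]
      exact hπh
    have hdvd := (ZMod.natCast_eq_natCast_iff _ _ _).mp hmod
    have hdvd2 := hdvd.dvd
    rw [hm] at hdvd2
    push_cast at hdvd2
    obtain ⟨lam', hl⟩ := hdvd2
    exact ⟨-lam', by linarith⟩
  have hps : (p : ℤ) ^ t ≠ 0 := pow_ne_zero _ (by exact_mod_cast hp.pos.ne')
  set u : ℤ := 1 + p * lam with hu
  have hcu : (c : ℤ) = (p : ℤ) ^ (s - t) * u := by
    have e1 : (p : ℤ) ^ t * (p : ℤ) ^ (s - t) = (p : ℤ) ^ s := by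
      rw [← pow_add, Nat.add_sub_cancel' hts]
    have e2 : (p : ℤ) ^ t * (p : ℤ) ^ (s - t) * p = (p : ℤ) ^ (s + 1) := by
      rw [e1, ← pow_succ]
    apply mul_left_cancel₀ hps
    rw [hu]
    linear_combination hlam - e1 - lam * e2
  have hcop : IsCoprime ((p : ℤ) ^ k) u := by
    have h1 : IsCoprime (p : ℤ) u := by
      rw [hu]
      exact (isCoprime_one_right).add_mul_left_right lam
    exact h1.pow_left
  obtain ⟨xi, u', hxy⟩ := hcop
  obtain ⟨e, he⟩ := hg (s - t)
  have hgz : ((p ^ (s - t) : ℕ) : ℤ) • e = g := by rw [natCast_zsmul, he]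
  have hpkz : ((p ^ k : ℕ) : ℤ) • g = 0 := by rw [natCast_zsmul, hkg]
  set d : G := u' • e with hd
  have he0 : p ^ (s - t + k) • e = 0 := by
    rw [show s - t + k = k + (s - t) from by omega, hpow_smul, he, hkg]
  have hd0 : ((m : ℕ) : ℤ) • d = 0 := by
    rw [hd, smul_comm, natCast_zsmul,
      show m • e = p ^ (t + 1 - k) • (p ^ (s - t + k) • e) from by
        rw [← hpow_smul]
        congr 1
        rw [hm]
        congr 1
        omega,
      he0, smul_zero, smul_zero]
  set L : ZMod m →+ G := ZMod.lift m ⟨zmultiplesHom G d, by simpa using hd0⟩ with hL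
  have hLint : ∀ z : ℤ, L (z : ZMod m) = z • d := fun z => ZMod.lift_coe _ _ z
  set F : AddMonoid.End G := L.comp π with hF
  have hFx : ∀ x : G, F x = L (π x) := fun x => rfl
  have hfh : F h = g := by
    rw [hFx, ← hcast, show ((c : ℕ) : ZMod m) = (((c : ℕ) : ℤ) : ZMod m) from by push_cast; ring,
      hLint, hd, hcu]
    rw [smul_smul]
    rw [show (p : ℤ) ^ (s - t) * u * u' = (u' * u) * ((p ^ (s - t) : ℕ) : ℤ) from by push_cast; ring]
    rw [mul_smul, hgz]
    have hub : u' * u = 1 - xi * (p : ℤ) ^ k := by linarith [hxy]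
    rw [hub, sub_smul, one_smul,
      show (xi * (p : ℤ) ^ k) • g = xi • (((p ^ k : ℕ) : ℤ) • g) from by
        rw [← mul_smul]; push_cast; ring_nf,
      hpkz, smul_zero, sub_zero]
  have hcastd : (((π d).val : ℕ) : ZMod m) = π d := ZMod.natCast_rightInverse (π d)
  have hπLz : ∀ z : ZMod m, π (L z) = z * π d := by
    intro z
    have hv2 : ((z.val : ℕ) : ZMod m) = z := ZMod.natCast_rightInverse z
    rw [← hv2, show ((z.val : ℕ) : ZMod m) = (((z.val : ℕ) : ℤ) : ZMod m) from by push_cast; ring,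
      hLint, map_zsmul, zsmul_eq_mul]
  have hnil : (π d) ^ (s + 1) = 0 := by
    have h3 : (p ^ (s - t) : ℕ) • d = u' • g := by
      rw [hd, ← natCast_zsmul, smul_comm, hgz]
    have h1 : ((p : ZMod m)) ^ (s - t) * π d = 0 := by
      have h2 : π ((p ^ (s - t) : ℕ) • d) = 0 := by
        rw [h3, map_zsmul, hπg, smul_zero]
      rw [map_nsmul, nsmul_eq_mul] at h2
      push_cast at h2
      exact h2
    have hval : ((p ^ (s - t) * (π d).val : ℕ) : ZMod m) = 0 := by
      push_cast
      rw [hcastd]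
      push_cast at h1
      exact h1
    have hdvd : m ∣ p ^ (s - t) * (π d).val := (ZMod.natCast_eq_zero_iff _ _).mp hval
    have hmsplit : m = p ^ (s - t) * p ^ (t + 1) := by
      rw [hm, ← pow_add]
      congr 1
      omega
    obtain ⟨q, hq⟩ := hdvd
    rw [hmsplit] at hq
    have hpst : 0 < p ^ (s - t) := pow_pos hp.pos _
    have hvq : (π d).val = p ^ (t + 1) * q := by
      apply Nat.eq_of_mul_eq_mul_left hpst
      rw [hq]; ring
    have h4 : π d = (p : ZMod m) ^ (t + 1) * (q : ZMod m) := by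
      rw [← hcastd, hvq]; push_cast; ring
    rw [h4, mul_pow, ← pow_mul]
    have hz : (p : ZMod m) ^ (s + 1) = 0 := by
      rw [show ((p : ZMod m)) ^ (s + 1) = ((p ^ (s + 1) : ℕ) : ZMod m) from by push_cast; ring,
        ← hm, ZMod.natCast_self]
    have h5 : (p : ZMod m) ^ ((t + 1) * (s + 1)) = 0 := by
      rw [show (t + 1) * (s + 1) = (s + 1) + ((t + 1) * (s + 1) - (s + 1)) from by
          have : s + 1 ≤ (t + 1) * (s + 1) := Nat.le_mul_of_pos_left _ (Nat.succ_pos t)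
          omega,
        pow_add, hz, zero_mul]
    rw [h5, zero_mul]
  have hπF : ∀ (n : ℕ) (x : G), π ((F ^ n) x) = (π d) ^ n * π x := by
    intro n
    induction n with
    | zero => intro x; simp
    | succ n ih =>
      intro x
      have hstep : (F ^ (n + 1)) x = (F ^ n) (F x) := by
        rw [pow_succ]; rfl
      rw [hstep, ih, hFx, hπLz]
      ring
  have hFnil : F ^ (s + 2) = 0 := by
    refine DFunLike.ext _ _ fun x => ?_
    have hstep : (F ^ (s + 2)) x = F ((F ^ (s + 1)) x) := by
      rw [pow_succ']; rfl
    rw [hstep, hFx, hπF, hnil, zero_mul, map_zero]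
    rfl
  have hFunit : IsUnit ((1 : AddMonoid.End G) + F) := IsNilpotent.isUnit_one_add ⟨s + 2, hFnil⟩
  obtain ⟨uu, huu⟩ := hFunit
  set φ : G ≃+ G :=
    { toFun := (uu : AddMonoid.End G),
      invFun := ((uu⁻¹ : (AddMonoid.End G)ˣ) : AddMonoid.End G),
      left_inv := fun x => by
        have : (((uu⁻¹ : (AddMonoid.End G)ˣ) : AddMonoid.End G) * (uu : AddMonoid.End G)) x = x := by
          rw [uu.inv_mul]; rfl
        exact this,
      right_inv := fun x => by
        have : ((uu : AddMonoid.End G) * ((uu⁻¹ : (AddMonoid.End G)ˣ) : AddMonoid.End G)) x = x := by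
          rw [uu.mul_inv]; rfl
        exact this,
      map_add' := fun x y => map_add _ x y } with hφ
  have hφh : φ h = h + g := by
    show (uu : AddMonoid.End G) h = h + g
    rw [huu]
    have : ((1 : AddMonoid.End G) + F) h = (1 : AddMonoid.End G) h + F h := rfl
    rw [this, hfh]
    rfl
  have hmem := hH φ h hhH
  rw [hφh] at hmem
  have hfin : (h + g) - h ∈ H := H.sub_mem hmem hhH
  simpa using hfin
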